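/- arXiv:2505.17817 — 4 statements merged into one kernel-verified Lean document; each statement's English description precedes it below -/
import Mathlib

section
/- Let F : ℝ → ℝ be C¹ with F'(t) > -π²/4 for all t, and let ψ₀ : [-1,1] → ℝ be a C² nonconstant solution of ψ₀'' = F(ψ₀) with ψ₀(-1) = ψ₀(1) = 0. Then ψ₀'(1) ≠ 0. -/
open Real Set Filter Topology

/-- Sturm comparison: if ψ' solves w'' = F'(ψ) w with F' > -π²/4, vanishes at a < b in
[-1,1] and has a fixed sign (via ε) on (a,b), contradiction. -/
lemma sturm_aux
    (F : ℝ → ℝ) (hF : ContDiff ℝ 1 F)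
    (hF' : ∀ t : ℝ, deriv F t > -(Real.pi ^ 2 / 4))
    (ψ ψ' ψ'' : ℝ → ℝ)
    (hψ : ∀ y ∈ Set.Icc (-1 : ℝ) 1, HasDerivAt ψ (ψ' y) y)
    (hψ' : ∀ y ∈ Set.Icc (-1 : ℝ) 1, HasDerivAt ψ' (ψ'' y) y)
    (hcont : ContinuousOn ψ'' (Set.Icc (-1 : ℝ) 1))
    (hode : ∀ y ∈ Set.Icc (-1 : ℝ) 1, ψ'' y = F (ψ y))
    (a b : ℝ) (ha : -1 ≤ a) (hb : b ≤ 1) (hab : a < b)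
    (hwa : ψ' a = 0) (hwb : ψ' b = 0)
    (ε : ℝ) (hpos : ∀ x ∈ Set.Ioo a b, 0 < ε * ψ' x) : False := by
  have hπ : (0:ℝ) < π := Real.pi_pos
  set m : ℝ := (a + b) / 2 with hm
  set v : ℝ → ℝ := fun x => Real.cos (π / 2 * (x - m)) with hv
  set v' : ℝ → ℝ := fun x => -(π / 2) * Real.sin (π / 2 * (x - m)) with hv'
  have hsub : Set.Icc a b ⊆ Set.Icc (-1:ℝ) 1 := Set.Icc_subset_Icc ha hb
  have hvd : ∀ x : ℝ, HasDerivAt v (v' x) x := by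
    intro x
    have h1 : HasDerivAt (fun x : ℝ => π / 2 * (x - m)) (π / 2) x := by
      simpa using ((hasDerivAt_id x).sub_const m).const_mul (π / 2)
    have := (Real.hasDerivAt_cos (π / 2 * (x - m))).comp x h1
    rw [show v' x = -Real.sin (π / 2 * (x - m)) * (π / 2) by simp only [hv']; ring]
    exact this
  have hvd' : ∀ x : ℝ, HasDerivAt v' (-(π ^ 2 / 4) * v x) x := by
    intro x
    have h1 : HasDerivAt (fun x : ℝ => π / 2 * (x - m)) (π / 2) x := by
      simpa using ((hasDerivAt_id x).sub_const m).const_mul (π / 2)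
    have h2 := ((Real.hasDerivAt_sin (π / 2 * (x - m))).comp x h1).const_mul (-(π / 2))
    have : HasDerivAt v' (-(π / 2) * (Real.cos (π / 2 * (x - m)) * (π / 2))) x := h2
    convert this using 1
    simp [hv]; ring
  -- bounds on arguments
  have hlen : b - a ≤ 2 := by linarith
  have hangle : ∀ x ∈ Set.Icc a b, π / 2 * (x - m) ∈ Set.Icc (-(π/2)) (π/2) := by
    intro x hx
    have h1 : -1 ≤ x - m := by simp only [hm]; linarith [hx.1, hx.2]
    have h2 : x - m ≤ 1 := by simp only [hm]; linarith [hx.1, hx.2]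
    constructor <;> nlinarith
  have hangle' : ∀ x ∈ Set.Ioo a b, π / 2 * (x - m) ∈ Set.Ioo (-(π/2)) (π/2) := by
    intro x hx
    have h1 : -1 < x - m := by simp only [hm]; nlinarith [hx.1, hx.2]
    have h2 : x - m < 1 := by simp only [hm]; nlinarith [hx.1, hx.2]
    constructor <;> nlinarith
  have hvpos : ∀ x ∈ Set.Ioo a b, 0 < v x := fun x hx =>
    Real.cos_pos_of_mem_Ioo (hangle' x hx)
  have hva : 0 ≤ v a := Real.cos_nonneg_of_mem_Icc (hangle a ⟨le_refl a, le_of_lt hab⟩)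
  have hvb : 0 ≤ v b := Real.cos_nonneg_of_mem_Icc (hangle b ⟨le_of_lt hab, le_refl b⟩)
  have hψ'cont : ∀ y ∈ Set.Icc (-1:ℝ) 1, ContinuousAt ψ' y := fun y hy =>
    (hψ' y hy).continuousAt
  -- Wronskian
  set W : ℝ → ℝ := fun x => ψ'' x * v x - ψ' x * v' x with hWdef
  have hWd : ∀ x ∈ Set.Ioo (-1:ℝ) 1, HasDerivAt W
      ((deriv F (ψ x) + π ^ 2 / 4) * (ψ' x * v x)) x := by
    intro x hx
    have hxI : x ∈ Set.Icc (-1:ℝ) 1 := Set.Ioo_subset_Icc_self hx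
    have hFd : HasDerivAt F (deriv F (ψ x)) (ψ x) :=
      ((hF.differentiable one_ne_zero) (ψ x)).hasDerivAt
    have hcomp : HasDerivAt (fun y => F (ψ y)) (deriv F (ψ x) * ψ' x) x :=
      hFd.comp x (hψ x hxI)
    have hEq : (fun y => ψ'' y) =ᶠ[nhds x] (fun y => F (ψ y)) := by
      filter_upwards [Ioo_mem_nhds hx.1 hx.2] with y hy
      exact hode y (Set.Ioo_subset_Icc_self hy)
    have hψ''d : HasDerivAt ψ'' (deriv F (ψ x) * ψ' x) x :=
      hcomp.congr_of_eventuallyEq hEq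
    have h1 : HasDerivAt (fun y => ψ'' y * v y)
        (deriv F (ψ x) * ψ' x * v x + ψ'' x * v' x) x := hψ''d.mul (hvd x)
    have h2 : HasDerivAt (fun y => ψ' y * v' y)
        (ψ'' x * v' x + ψ' x * (-(π ^ 2 / 4) * v x)) x := (hψ' x hxI).mul (hvd' x)
    have := h1.sub h2
    rw [show (deriv F (ψ x) + π ^ 2 / 4) * (ψ' x * v x) = deriv F (ψ x) * ψ' x * v x + ψ'' x * v' x - (ψ'' x * v' x + ψ' x * (-(π ^ 2 / 4) * v x)) by ring]
    exact this
  -- strict monotonicity of ε * W on [a,b]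
  have hWcont : ContinuousOn W (Set.Icc a b) := by
    apply ContinuousOn.sub
    · exact (hcont.mono hsub).mul ((Real.continuous_cos.comp
        (continuous_const.mul (continuous_id.sub continuous_const))).continuousOn)
    · refine ContinuousOn.mul (fun y hy => (hψ'cont y (hsub hy)).continuousWithinAt) ?_
      exact
        ((continuous_const.mul (Real.continuous_sin.comp
          (continuous_const.mul (continuous_id.sub continuous_const)))).continuousOn)
  have hmono : StrictMonoOn (fun x => ε * W x) (Set.Icc a b) := by
    apply strictMonoOn_of_deriv_pos (convex_Icc a b)
    · exact continuousOn_const.mul hWcont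
    · intro x hx
      rw [interior_Icc] at hx
      have hxI : x ∈ Set.Ioo (-1:ℝ) 1 := ⟨lt_of_le_of_lt ha hx.1, lt_of_lt_of_le hx.2 hb⟩
      have hd : HasDerivAt (fun y => ε * W y)
          (ε * ((deriv F (ψ x) + π ^ 2 / 4) * (ψ' x * v x))) x := (hWd x hxI).const_mul ε
      rw [hd.deriv]
      have h1 : 0 < deriv F (ψ x) + π ^ 2 / 4 := by linarith [hF' (ψ x)]
      have h2 : 0 < ε * ψ' x := hpos x hx
      have h3 : 0 < v x := hvpos x hx
      calc (0:ℝ) < (deriv F (ψ x) + π ^ 2 / 4) * ((ε * ψ' x) * v x) := by positivity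
        _ = ε * ((deriv F (ψ x) + π ^ 2 / 4) * (ψ' x * v x)) := by ring
  -- endpoint sign of ε * ψ'' via slopes
  have hNeBot_a : (𝓝[Set.Ioo a b] a).NeBot := by
    rw [← mem_closure_iff_nhdsWithin_neBot, closure_Ioo hab.ne]
    exact ⟨le_refl a, le_of_lt hab⟩
  have hNeBot_b : (𝓝[Set.Ioo a b] b).NeBot := by
    rw [← mem_closure_iff_nhdsWithin_neBot, closure_Ioo hab.ne]
    exact ⟨le_of_lt hab, le_refl b⟩
  have hga : HasDerivAt (fun x => ε * ψ' x) (ε * ψ'' a) a :=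
    (hψ' a (hsub ⟨le_refl a, le_of_lt hab⟩)).const_mul ε
  have hgb : HasDerivAt (fun x => ε * ψ' x) (ε * ψ'' b) b :=
    (hψ' b (hsub ⟨le_of_lt hab, le_refl b⟩)).const_mul ε
  have hkey_a : 0 ≤ ε * ψ'' a := by
    have htend : Tendsto (slope (fun x => ε * ψ' x) a) (𝓝[Set.Ioo a b] a) (𝓝 (ε * ψ'' a)) :=
      (hasDerivAt_iff_tendsto_slope.1 hga).mono_left
        (nhdsWithin_mono a (fun x hx => ne_of_gt hx.1))
    refine ge_of_tendsto htend ?_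
    filter_upwards [self_mem_nhdsWithin] with x hx
    have h1 : 0 < ε * ψ' x := hpos x hx
    have h2 : 0 < x - a := by linarith [hx.1]
    rw [slope_def_field, hwa]
    have : ε * ψ' x - ε * 0 = ε * ψ' x := by ring
    rw [this]
    positivity
  have hkey_b : ε * ψ'' b ≤ 0 := by
    have htend : Tendsto (slope (fun x => ε * ψ' x) b) (𝓝[Set.Ioo a b] b) (𝓝 (ε * ψ'' b)) :=
      (hasDerivAt_iff_tendsto_slope.1 hgb).mono_left
        (nhdsWithin_mono b (fun x hx => ne_of_lt hx.2))
    refine le_of_tendsto htend ?_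
    filter_upwards [self_mem_nhdsWithin] with x hx
    have h1 : 0 < ε * ψ' x := hpos x hx
    have h2 : x - b < 0 := by linarith [hx.2]
    rw [slope_def_field, hwb]
    have h3 : ε * ψ' x - ε * 0 = ε * ψ' x := by ring
    rw [h3]
    exact le_of_lt (div_neg_of_pos_of_neg h1 h2)
  -- contradiction
  have hlt : ε * W a < ε * W b :=
    hmono ⟨le_refl a, le_of_lt hab⟩ ⟨le_of_lt hab, le_refl b⟩ hab
  have hWa : ε * W a = (ε * ψ'' a) * v a := by
    simp only [hWdef, hwa]; ring
  have hWb : ε * W b = (ε * ψ'' b) * v b := by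
    simp only [hWdef, hwb]; ring
  have h1 : 0 ≤ ε * W a := by rw [hWa]; exact mul_nonneg hkey_a hva
  have h2 : ε * W b ≤ 0 := by rw [hWb]; exact mul_nonpos_of_nonpos_of_nonneg hkey_b hvb
  linarith


/-- If F ∈ C¹ with F' > -π²/4 everywhere and ψ₀ is a C² nonconstant solution
of ψ₀'' = F(ψ₀) on [-1,1] with ψ₀(±1) = 0, then ψ₀'(1) ≠ 0. -/
theorem stmt2
    (F : ℝ → ℝ) (hF : ContDiff ℝ 1 F)
    (hF' : ∀ t : ℝ, deriv F t > -(Real.pi ^ 2 / 4))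
    (ψ ψ' ψ'' : ℝ → ℝ)
    (hψ : ∀ y ∈ Set.Icc (-1 : ℝ) 1, HasDerivAt ψ (ψ' y) y)
    (hψ' : ∀ y ∈ Set.Icc (-1 : ℝ) 1, HasDerivAt ψ' (ψ'' y) y)
    (hcont : ContinuousOn ψ'' (Set.Icc (-1 : ℝ) 1))
    (hode : ∀ y ∈ Set.Icc (-1 : ℝ) 1, ψ'' y = F (ψ y))
    (hbc₁ : ψ (-1) = 0) (hbc₂ : ψ 1 = 0)
    (hnonconst : ∃ y₁ ∈ Set.Icc (-1 : ℝ) 1, ∃ y₂ ∈ Set.Icc (-1 : ℝ) 1, ψ y₁ ≠ ψ y₂) :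
    ψ' 1 ≠ 0 := by
  intro h1
  have hψcont : ContinuousOn ψ (Set.Icc (-1:ℝ) 1) := fun y hy =>
    (hψ y hy).continuousAt.continuousWithinAt
  have hψ'contAt : ∀ y ∈ Set.Icc (-1:ℝ) 1, ContinuousAt ψ' y := fun y hy =>
    (hψ' y hy).continuousAt
  -- Claim A: ψ' vanishes on [c,1] once it vanishes at c
  have claimA : ∀ c ∈ Set.Icc (-1:ℝ) 1, ψ' c = 0 → ∀ x ∈ Set.Icc c 1, ψ' x = 0 := by
    intro c hc hc0
    by_contra hcontra
    push_neg at hcontra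
    obtain ⟨x, hx, hx0⟩ := hcontra
    have hcx : c < x := lt_of_le_of_ne hx.1 (by rintro rfl; exact hx0 hc0)
    have hx1 : x < 1 := lt_of_le_of_ne hx.2 (by rintro rfl; exact hx0 h1)
    have hxI : x ∈ Set.Icc (-1:ℝ) 1 := ⟨le_trans hc.1 hx.1, hx.2⟩
    set S₁ := Set.Icc c x ∩ ψ' ⁻¹' {0} with hS₁def
    have hS₁closed : IsClosed S₁ := ContinuousOn.preimage_isClosed_of_isClosed
      (fun y hy => (hψ'contAt y ⟨le_trans hc.1 hy.1, le_trans hy.2 hx.2⟩).continuousWithinAt)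
      isClosed_Icc isClosed_singleton
    have hS₁ne : S₁.Nonempty := ⟨c, ⟨le_refl c, hcx.le⟩, hc0⟩
    set A := sSup S₁ with hAdef
    have hA : A ∈ S₁ := hS₁closed.csSup_mem hS₁ne ⟨x, fun y hy => hy.1.2⟩
    have hAx : A < x := lt_of_le_of_ne hA.1.2 (fun h => hx0 (h ▸ hA.2))
    set S₂ := Set.Icc x 1 ∩ ψ' ⁻¹' {0} with hS₂def
    have hS₂closed : IsClosed S₂ := ContinuousOn.preimage_isClosed_of_isClosed
      (fun y hy => (hψ'contAt y ⟨le_trans hxI.1 hy.1, hy.2⟩).continuousWithinAt)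
      isClosed_Icc isClosed_singleton
    have hS₂ne : S₂.Nonempty := ⟨1, ⟨hx.2, le_refl 1⟩, h1⟩
    set B := sInf S₂ with hBdef
    have hB : B ∈ S₂ := hS₂closed.csInf_mem hS₂ne ⟨x, fun y hy => hy.1.1⟩
    have hxB : x < B := lt_of_le_of_ne hB.1.1 (by rintro h; exact hx0 (h ▸ hB.2))
    have hAB : A < B := hAx.trans hxB
    have hA1 : -1 ≤ A := le_trans hc.1 hA.1.1
    have hB1 : B ≤ 1 := hB.1.2
    -- nonvanishing on (A,B)
    have hnz : ∀ t ∈ Set.Ioo A B, ψ' t ≠ 0 := by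
      intro t ht h0
      rcases le_or_gt t x with h | h
      · have : t ∈ S₁ := ⟨⟨le_trans hA.1.1 ht.1.le, h⟩, h0⟩
        exact absurd (le_csSup ⟨x, fun y hy => hy.1.2⟩ this) (not_le.2 ht.1)
      · have : t ∈ S₂ := ⟨⟨h.le, le_trans ht.2.le hB1⟩, h0⟩
        exact absurd (csInf_le ⟨x, fun y hy => hy.1.1⟩ this) (not_le.2 ht.2)
    -- fixed sign via ε
    set ε : ℝ := if 0 < ψ' x then 1 else -1 with hεdef
    have hεx : 0 < ε * ψ' x := by
      by_cases h : 0 < ψ' x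
      · simp [hεdef, h]
      · have : ψ' x < 0 := lt_of_le_of_ne (not_lt.1 h) hx0
        simp only [hεdef, if_neg h]; linarith
    have hεne : ε ≠ 0 := by
      by_cases h : 0 < ψ' x <;> simp [hεdef, h]
    have hxAB : x ∈ Set.Ioo A B := ⟨hAx, hxB⟩
    have hsign : ∀ t ∈ Set.Ioo A B, 0 < ε * ψ' t := by
      intro t ht
      by_contra hle
      push_neg at hle
      have htne : ε * ψ' t ≠ 0 := mul_ne_zero hεne (hnz t ht)
      have htneg : ε * ψ' t < 0 := lt_of_le_of_ne hle htne
      have hsubAB : Set.uIcc t x ⊆ Set.Ioo A B :=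
        (Set.ordConnected_Ioo).uIcc_subset ht hxAB
      have hsubI : Set.Ioo A B ⊆ Set.Icc (-1:ℝ) 1 := fun y hy =>
        ⟨le_trans hA1 hy.1.le, le_trans hy.2.le hB1⟩
      have hgcont : ContinuousOn (fun y => ε * ψ' y) (Set.uIcc t x) := fun y hy =>
        (continuousAt_const.mul (hψ'contAt y (hsubI (hsubAB hy)))).continuousWithinAt
      have h0mem : (0:ℝ) ∈ Set.uIcc (ε * ψ' t) (ε * ψ' x) :=
        Set.mem_uIcc.2 (Or.inl ⟨htneg.le, hεx.le⟩)
      obtain ⟨z, hz, hz0⟩ := intermediate_value_uIcc hgcont h0mem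
      have hz0' : ε * ψ' z = 0 := hz0
      have : ψ' z = 0 := by
        rcases mul_eq_zero.1 hz0' with h | h
        · exact absurd h hεne
        · exact h
      exact hnz z (hsubAB hz) this
    exact sturm_aux F hF hF' ψ ψ' ψ'' hψ hψ' hcont hode A B hA1 hB1 hAB hA.2 hB.2 ε hsign
  -- Rolle gives an interior zero of ψ'
  obtain ⟨c, hcmem, hc0⟩ := exists_hasDerivAt_eq_zero (show (-1:ℝ) < 1 by norm_num)
    hψcont (hbc₁.trans hbc₂.symm) (fun x hx => hψ x (Set.Ioo_subset_Icc_self hx))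
  set Z := Set.Icc (-1:ℝ) 1 ∩ ψ' ⁻¹' {0} with hZdef
  have hZclosed : IsClosed Z := ContinuousOn.preimage_isClosed_of_isClosed
    (fun y hy => (hψ'contAt y hy).continuousWithinAt) isClosed_Icc isClosed_singleton
  have hZne : Z.Nonempty := ⟨c, Set.Ioo_subset_Icc_self hcmem, hc0⟩
  have hZbdd : BddBelow Z := ⟨-1, fun y hy => hy.1.1⟩
  set a₀ := sInf Z with ha₀def
  have ha₀ : a₀ ∈ Z := hZclosed.csInf_mem hZne hZbdd
  have hzero : ∀ x ∈ Set.Icc a₀ 1, ψ' x = 0 := claimA a₀ ha₀.1 ha₀.2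
  have hconst : ∀ x ∈ Set.Icc a₀ 1, ψ x = ψ a₀ := by
    apply constant_of_has_deriv_right_zero
      (hψcont.mono (Set.Icc_subset_Icc ha₀.1.1 le_rfl))
    intro x hx
    have hxI : x ∈ Set.Icc (-1:ℝ) 1 := ⟨le_trans ha₀.1.1 hx.1, hx.2.le⟩
    have := hψ x hxI
    rw [hzero x ⟨hx.1, hx.2.le⟩] at this
    exact this.hasDerivWithinAt
  have hψa₀ : ψ a₀ = 0 := by
    have := hconst 1 ⟨ha₀.1.2, le_refl 1⟩
    rw [hbc₂] at this
    exact this.symm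
  by_cases hcase : a₀ = -1
  · obtain ⟨y₁, hy₁, y₂, hy₂, hne⟩ := hnonconst
    rw [hcase] at hconst
    exact hne ((hconst y₁ hy₁).trans (hconst y₂ hy₂).symm)
  · have ha₀gt : -1 < a₀ := lt_of_le_of_ne ha₀.1.1 (Ne.symm hcase)
    have hnz : ∀ t ∈ Set.Ico (-1:ℝ) a₀, ψ' t ≠ 0 := by
      intro t ht h0
      have : t ∈ Z := ⟨⟨ht.1, le_trans ht.2.le ha₀.1.2⟩, h0⟩
      exact absurd (csInf_le hZbdd this) (not_le.2 ht.2)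
    set t₀ := (-1 + a₀) / 2 with ht₀def
    have ht₀ : t₀ ∈ Set.Ico (-1:ℝ) a₀ := ⟨by simp only [ht₀def]; linarith, by
      simp only [ht₀def]; linarith⟩
    set ε : ℝ := if 0 < ψ' t₀ then 1 else -1 with hεdef
    have hεt₀ : 0 < ε * ψ' t₀ := by
      by_cases h : 0 < ψ' t₀
      · simp [hεdef, h]
      · have : ψ' t₀ < 0 := lt_of_le_of_ne (not_lt.1 h) (hnz t₀ ht₀)
        simp only [hεdef, if_neg h]; linarith
    have hεne : ε ≠ 0 := by
      by_cases h : 0 < ψ' t₀ <;> simp [hεdef, h]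
    have hsubI : Set.Ico (-1:ℝ) a₀ ⊆ Set.Icc (-1:ℝ) 1 := fun y hy =>
      ⟨hy.1, le_trans hy.2.le ha₀.1.2⟩
    have hsign : ∀ t ∈ Set.Ico (-1:ℝ) a₀, 0 < ε * ψ' t := by
      intro t ht
      by_contra hle
      push_neg at hle
      have htneg : ε * ψ' t < 0 := lt_of_le_of_ne hle (mul_ne_zero hεne (hnz t ht))
      have hsubAB : Set.uIcc t t₀ ⊆ Set.Ico (-1:ℝ) a₀ :=
        (Set.ordConnected_Ico).uIcc_subset ht ht₀
      have hgcont : ContinuousOn (fun y => ε * ψ' y) (Set.uIcc t t₀) := fun y hy =>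
        (continuousAt_const.mul (hψ'contAt y (hsubI (hsubAB hy)))).continuousWithinAt
      have h0mem : (0:ℝ) ∈ Set.uIcc (ε * ψ' t) (ε * ψ' t₀) :=
        Set.mem_uIcc.2 (Or.inl ⟨htneg.le, hεt₀.le⟩)
      obtain ⟨z, hz, hz0⟩ := intermediate_value_uIcc hgcont h0mem
      have hz0' : ε * ψ' z = 0 := hz0
      have : ψ' z = 0 := by
        rcases mul_eq_zero.1 hz0' with h | h
        · exact absurd h hεne
        · exact h
      exact hnz z (hsubAB hz) this
    have hmono : StrictMonoOn (fun y => ε * ψ y) (Set.Icc (-1:ℝ) a₀) := by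
      apply strictMonoOn_of_deriv_pos (convex_Icc _ _)
      · exact continuousOn_const.mul (hψcont.mono (Set.Icc_subset_Icc le_rfl ha₀.1.2))
      · intro y hy
        rw [interior_Icc] at hy
        have hyI : y ∈ Set.Icc (-1:ℝ) 1 := ⟨hy.1.le, le_trans hy.2.le ha₀.1.2⟩
        have hd : HasDerivAt (fun z => ε * ψ z) (ε * ψ' y) y := (hψ y hyI).const_mul ε
        rw [hd.deriv]
        exact hsign y ⟨hy.1.le, hy.2⟩
    have := hmono ⟨le_refl _, ha₀gt.le⟩ ⟨ha₀gt.le, le_refl _⟩ ha₀gt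
    simp only [hbc₁, hψa₀] at this
    exact lt_irrefl _ this
end

section
/- Let F : ℝ → ℝ be C¹ with F'(t) > -λ₁ for all t, where λ₁ > 0 is such that ∫_{y₀}^{y₁} (u')² ≥ λ₁ ∫_{y₀}^{y₁} u² for all u ∈ H¹₀(y₀,y₁) whenever [y₀,y₁] ⊆ [-1,1]. Suppose ψ₀ : [-1,1] → ℝ is C² with ψ₀'' = F(ψ₀), ψ₀(-1) = c_g, ψ₀(1) = c_h, c_g ≠ c_h, and ψ₀'(y₀) = 0 for some y₀ ∈ (-1,1). Then y₀ is the unique critical point of ψ₀ in [-1,1]. -/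
open Set Filter Asymptotics
open scoped NNReal

noncomputable def clp (a b y : ℝ) : ℝ := max a (min y b)

lemma clp_continuous (a b : ℝ) : Continuous (clp a b) :=
  continuous_const.max (continuous_id.min continuous_const)

lemma clp_mem {a b : ℝ} (hab : a ≤ b) (y : ℝ) : clp a b y ∈ Set.Icc a b :=
  ⟨le_max_left _ _, max_le hab (min_le_right _ _)⟩

lemma clp_of_mem {a b y : ℝ} (hy : y ∈ Set.Icc a b) : clp a b y = y := by
  unfold clp; rw [min_eq_left hy.2, max_eq_right hy.1]

lemma clp_of_le {a b y : ℝ} (hab : a ≤ b) (hy : y ≤ a) : clp a b y = a := by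
  unfold clp; rw [min_eq_left (hy.trans hab), max_eq_left hy]

lemma clp_of_ge {a b y : ℝ} (hab : a ≤ b) (hy : b ≤ y) : clp a b y = b := by
  unfold clp; rw [min_eq_right hy, max_eq_right hab]

lemma clp_dist_a {a b : ℝ} (hab : a ≤ b) (z : ℝ) : |clp a b z - a| ≤ |z - a| := by
  rcases le_total z a with h | h
  · rw [clp_of_le hab h]; simp [abs_nonneg]
  · have h1 : a ≤ clp a b z := le_max_left _ _
    have h2 : clp a b z ≤ z := max_le h (min_le_left _ _)
    rw [abs_of_nonneg (by linarith), abs_of_nonneg (by linarith)]; linarith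

lemma clp_dist_b {a b : ℝ} (hab : a ≤ b) (z : ℝ) : |clp a b z - b| ≤ |z - b| := by
  rcases le_total z b with h | h
  · have h1 : clp a b z ≤ b := max_le hab (min_le_right _ _)
    have h2 : z ≤ clp a b z := le_max_of_le_right (le_min (le_refl _) h)
    rw [abs_of_nonpos (by linarith), abs_of_nonpos (by linarith)]; linarith
  · rw [clp_of_ge hab h]; simp [abs_nonneg]

/-- composing a little-o function with the clamp -/
lemma comp_clp_isLittleO {E : ℝ → ℝ} {c a b : ℝ}
    (hd : ∀ z, |clp a b z - c| ≤ |z - c|) (hc : clp a b c = c)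
    (hE : E =o[nhds c] fun z => z - c) :
    (fun z => E (clp a b z)) =o[nhds c] fun z => z - c := by
  rw [isLittleO_iff] at hE ⊢
  intro ε hε
  have hcont : Tendsto (clp a b) (nhds c) (nhds c) := by
    have := (clp_continuous a b).tendsto c
    rwa [hc] at this
  filter_upwards [hcont.eventually (hE hε)] with z hz
  calc ‖E (clp a b z)‖ ≤ ε * ‖clp a b z - c‖ := hz
    _ ≤ ε * ‖z - c‖ := by
        rw [Real.norm_eq_abs, Real.norm_eq_abs]
        exact mul_le_mul_of_nonneg_left (hd z) hε.le

/-- derivative of the first-order Taylor extension of g outside [a,b] -/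
lemma ext_hasDerivAt {g g' : ℝ → ℝ} {a b : ℝ} (hab : a < b)
    (hg : ∀ y ∈ Set.Icc a b, HasDerivAt g (g' y) y) (y : ℝ) :
    HasDerivAt (fun z => g (clp a b z) + g' (clp a b z) * (z - clp a b z))
      (g' (clp a b y)) y := by
  set u : ℝ → ℝ := fun z => g (clp a b z) + g' (clp a b z) * (z - clp a b z) with hu
  rcases lt_trichotomy y a with hya | rfl | hya
  · -- y < a
    have h1 : HasDerivAt (fun z => g a + g' a * (z - a)) (g' a) y := by
      simpa using (((hasDerivAt_id y).sub_const a).const_mul (g' a)).const_add (g a)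
    have he : u =ᶠ[nhds y] fun z => g a + g' a * (z - a) := by
      filter_upwards [Iio_mem_nhds hya] with z hz
      simp only [hu, clp_of_le hab.le hz.le]
    rw [clp_of_le hab.le hya.le]
    exact h1.congr_of_eventuallyEq he
  · -- y = a
    rw [clp_of_mem ⟨le_refl _, hab.le⟩]
    have hga := hg y ⟨le_refl _, hab.le⟩
    rw [hasDerivAt_iff_isLittleO] at hga ⊢
    have key : (fun z => u z - u y - (z - y) • g' y)
        =ᶠ[nhds y] fun z => (g (clp y b z) - g y - (clp y b z - y) • g' y) := by
      filter_upwards [Iio_mem_nhds hab] with z hz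
      have huy : u y = g y := by simp [hu, clp_of_mem ⟨le_refl _, hab.le⟩]
      rcases le_total z y with h | h
      · rw [huy]; simp only [hu, clp_of_le hab.le h, smul_eq_mul]; ring
      · rw [huy]; simp only [hu, clp_of_mem ⟨h, hz.le⟩, smul_eq_mul]; ring
    refine ((comp_clp_isLittleO (E := fun w => g w - g y - (w - y) • g' y) (clp_dist_a hab.le) (clp_of_mem ⟨le_refl _, hab.le⟩) ?_).congr'
      key.symm (EventuallyEq.refl _ _))
    simpa [smul_eq_mul] using hga
  rcases lt_trichotomy y b with hyb | rfl | hyb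
  · -- a < y < b
    have hy : y ∈ Set.Icc a b := ⟨hya.le, hyb.le⟩
    have he : u =ᶠ[nhds y] g := by
      filter_upwards [Ioo_mem_nhds hya hyb] with z hz
      simp [hu, clp_of_mem ⟨hz.1.le, hz.2.le⟩]
    rw [clp_of_mem hy]
    exact (hg y hy).congr_of_eventuallyEq he
  · -- y = b
    rw [clp_of_mem ⟨hab.le, le_refl _⟩]
    have hgb := hg y ⟨hab.le, le_refl _⟩
    rw [hasDerivAt_iff_isLittleO] at hgb ⊢
    have key : (fun z => u z - u y - (z - y) • g' y)
        =ᶠ[nhds y] fun z => (g (clp a y z) - g y - (clp a y z - y) • g' y) := by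
      filter_upwards [Ioi_mem_nhds hab] with z hz
      have huy : u y = g y := by simp [hu, clp_of_mem ⟨hab.le, le_refl _⟩]
      rcases le_total z y with h | h
      · rw [huy]; simp only [hu, clp_of_mem ⟨hz.le, h⟩, smul_eq_mul]; ring
      · rw [huy]; simp only [hu, clp_of_ge hab.le h, smul_eq_mul]; ring
    refine ((comp_clp_isLittleO (E := fun w => g w - g y - (w - y) • g' y) (clp_dist_b hab.le) (clp_of_mem ⟨hab.le, le_refl _⟩) ?_).congr'
      key.symm (EventuallyEq.refl _ _))
    simpa [smul_eq_mul] using hgb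
  · -- b < y
    have h1 : HasDerivAt (fun z => g b + g' b * (z - b)) (g' b) y := by
      simpa using (((hasDerivAt_id y).sub_const b).const_mul (g' b)).const_add (g b)
    have he : u =ᶠ[nhds y] fun z => g b + g' b * (z - b) := by
      filter_upwards [Ioi_mem_nhds hyb] with z hz
      simp only [hu, clp_of_ge hab.le hz.le]
    rw [clp_of_ge hab.le hyb.le]
    exact h1.congr_of_eventuallyEq he




/-- Uniqueness of the stagnation level for a shear flow with non-trivial
homology.  F ∈ C¹ with F' > -λ₁, where λ₁ > 0 satisfies the Poincaré inequality
∫ (u')² ≥ λ₁ ∫ u² on every subinterval [a,b] ⊆ [-1,1] for u vanishing at the endpoints.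
If ψ₀'' = F(ψ₀) on [-1,1], ψ₀(-1) = c_g, ψ₀(1) = c_h with c_g ≠ c_h, and ψ₀'(y₀) = 0 for
some y₀ ∈ (-1,1), then y₀ is the unique critical point of ψ₀ in [-1,1]. -/
theorem stmt3
    (F : ℝ → ℝ) (hF : ContDiff ℝ 1 F)
    (lam : ℝ) (hlam : 0 < lam)
    (hpoincare : ∀ a b : ℝ, -1 ≤ a → a < b → b ≤ 1 →
      ∀ u u' : ℝ → ℝ, Continuous u' → (∀ y, HasDerivAt u (u' y) y) →
        u a = 0 → u b = 0 →
        lam * ∫ y in a..b, (u y) ^ 2 ≤ ∫ y in a..b, (u' y) ^ 2)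
    (hF' : ∀ t : ℝ, deriv F t > -lam)
    (ψ ψ' ψ'' : ℝ → ℝ)
    (hψ : ∀ y ∈ Set.Icc (-1 : ℝ) 1, HasDerivAt ψ (ψ' y) y)
    (hψ' : ∀ y ∈ Set.Icc (-1 : ℝ) 1, HasDerivAt ψ' (ψ'' y) y)
    (hcont : ContinuousOn ψ'' (Set.Icc (-1 : ℝ) 1))
    (hode : ∀ y ∈ Set.Icc (-1 : ℝ) 1, ψ'' y = F (ψ y))
    (cg ch : ℝ) (hbc₁ : ψ (-1) = cg) (hbc₂ : ψ 1 = ch) (hhom : cg ≠ ch)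
    (y₀ : ℝ) (hy₀ : y₀ ∈ Set.Ioo (-1 : ℝ) 1) (hcrit : ψ' y₀ = 0) :
    ∀ y ∈ Set.Icc (-1 : ℝ) 1, ψ' y = 0 → y = y₀ := by
  intro y₁ hy₁ hcrit₁
  by_contra hne
  -- set up a < b, both critical, inside [-1,1]
  obtain ⟨a, b, hab, ha1, hb1, hca, hcb⟩ :
      ∃ a b : ℝ, a < b ∧ -1 ≤ a ∧ b ≤ 1 ∧ ψ' a = 0 ∧ ψ' b = 0 := by
    rcases lt_or_gt_of_ne hne with h | h
    · exact ⟨y₁, y₀, h, hy₁.1, hy₀.2.le, hcrit₁, hcrit⟩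
    · exact ⟨y₀, y₁, h, hy₀.1.le, hy₁.2, hcrit, hcrit₁⟩
  have hsub : Set.Icc a b ⊆ Set.Icc (-1 : ℝ) 1 := Set.Icc_subset_Icc ha1 hb1
  have hψc : ContinuousOn ψ (Set.Icc (-1:ℝ) 1) :=
    fun y hy => (hψ y hy).continuousAt.continuousWithinAt
  have hψ'c : ContinuousOn ψ' (Set.Icc (-1:ℝ) 1) :=
    fun y hy => (hψ' y hy).continuousAt.continuousWithinAt
  have hDF : Continuous (deriv F) := hF.continuous_deriv le_rfl
  -- Step 1: ψ' vanishes identically on [a,b]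
  have hzero : ∀ y ∈ Set.Icc a b, ψ' y = 0 := by
    set u : ℝ → ℝ := fun z => ψ' (clp a b z) + ψ'' (clp a b z) * (z - clp a b z) with hudef
    set u' : ℝ → ℝ := fun z => ψ'' (clp a b z) with hu'def
    have hu' : ∀ y, HasDerivAt u (u' y) y :=
      ext_hasDerivAt hab (fun y hy => hψ' y (hsub hy))
    have hu'c : Continuous u' :=
      (hcont.mono hsub).comp_continuous (clp_continuous a b) (fun x => clp_mem hab.le x)
    have hua : u a = 0 := by
      simp [hudef, clp_of_mem (Set.mem_Icc.mpr ⟨le_refl a, hab.le⟩), hca]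
    have hub : u b = 0 := by
      simp [hudef, clp_of_mem (Set.mem_Icc.mpr ⟨hab.le, le_refl b⟩), hcb]
    have hpoin := hpoincare a b ha1 hab hb1 u u' hu'c hu' hua hub
    have hequ : (∫ y in a..b, (u y)^2) = ∫ y in a..b, (ψ' y)^2 := by
      apply intervalIntegral.integral_congr
      intro y hy
      rw [Set.uIcc_of_le hab.le] at hy
      simp [hudef, clp_of_mem hy]
    have hequ' : (∫ y in a..b, (u' y)^2) = ∫ y in a..b, (ψ'' y)^2 := by
      apply intervalIntegral.integral_congr
      intro y hy
      rw [Set.uIcc_of_le hab.le] at hy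
      simp [hu'def, clp_of_mem hy]
    rw [hequ, hequ'] at hpoin
    have hFd : Differentiable ℝ F := hF.differentiable one_ne_zero
    have hftc : (∫ y in a..b, (deriv F (ψ y) * (ψ' y)^2 + (ψ'' y)^2)) = 0 := by
      have hfund := intervalIntegral.integral_eq_sub_of_hasDerivAt
        (f := fun y => F (ψ y) * ψ' y)
        (f' := fun y => deriv F (ψ y) * (ψ' y)^2 + (ψ'' y)^2)
        (a := a) (b := b) ?_ ?_
      · rw [hfund, hca, hcb]; ring
      · intro y hy
        rw [Set.uIcc_of_le hab.le] at hy
        have hyI := hsub hy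
        have h1 : HasDerivAt (fun z => F (ψ z)) (deriv F (ψ y) * ψ' y) y :=
          (hFd (ψ y)).hasDerivAt.comp y (hψ y hyI)
        have h2 := h1.mul (hψ' y hyI)
        have h5 : deriv F (ψ y) * ψ' y * ψ' y + F (ψ y) * ψ'' y
            = deriv F (ψ y) * (ψ' y)^2 + (ψ'' y)^2 := by
          rw [← hode y hyI]; ring
        show HasDerivAt (fun z => F (ψ z) * ψ' z)
          (deriv F (ψ y) * (ψ' y)^2 + (ψ'' y)^2) y
        rw [← h5]
        exact h2
      · apply ContinuousOn.intervalIntegrable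
        rw [Set.uIcc_of_le hab.le]
        exact (((hDF.comp_continuousOn hψc).mul (hψ'c.pow 2)).add (hcont.pow 2)).mono hsub
    have hint1 : IntervalIntegrable (fun y => deriv F (ψ y) * (ψ' y)^2)
        MeasureTheory.volume a b := by
      apply ContinuousOn.intervalIntegrable
      rw [Set.uIcc_of_le hab.le]
      exact ((hDF.comp_continuousOn hψc).mul (hψ'c.pow 2)).mono hsub
    have hint2 : IntervalIntegrable (fun y => (ψ'' y)^2) MeasureTheory.volume a b := by
      apply ContinuousOn.intervalIntegrable
      rw [Set.uIcc_of_le hab.le]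
      exact (hcont.pow 2).mono hsub
    have hint3 : IntervalIntegrable (fun y => lam * (ψ' y)^2) MeasureTheory.volume a b := by
      apply ContinuousOn.intervalIntegrable
      rw [Set.uIcc_of_le hab.le]
      exact (continuousOn_const.mul ((hψ'c.pow 2))).mono hsub
    have hsplit : (∫ y in a..b, deriv F (ψ y) * (ψ' y)^2) + (∫ y in a..b, (ψ'' y)^2) = 0 := by
      rw [← intervalIntegral.integral_add hint1 hint2]; exact hftc
    intro y hy
    by_contra hne0
    have hwpos : 0 < (lam + deriv F (ψ y)) * (ψ' y)^2 := by
      have h1 := hF' (ψ y)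
      have h2 : 0 < (ψ' y)^2 := by positivity
      nlinarith
    have hwint : (∫ z in a..b, (lam + deriv F (ψ z)) * (ψ' z)^2)
        = lam * (∫ z in a..b, (ψ' z)^2) + ∫ z in a..b, deriv F (ψ z) * (ψ' z)^2 := by
      rw [← intervalIntegral.integral_const_mul, ← intervalIntegral.integral_add hint3 hint1]
      apply intervalIntegral.integral_congr
      intro z _; ring
    have hpos : 0 < ∫ z in a..b, (lam + deriv F (ψ z)) * (ψ' z)^2 := by
      apply intervalIntegral.integral_pos hab
      · exact ((continuousOn_const.add (hDF.comp_continuousOn (hψc.mono hsub))).mul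
          (((hψ'c.mono hsub)).pow 2))
      · intro x _
        have h1 := hF' (ψ x)
        have h2 : (0:ℝ) ≤ (ψ' x)^2 := sq_nonneg _
        nlinarith
      · exact ⟨y, hy, hwpos⟩
    rw [hwint] at hpos
    linarith
  -- Step 2: at the midpoint, ψ'' = 0 hence F (ψ m) = 0
  set m : ℝ := (a + b) / 2 with hm
  have hma : a < m := by simp only [hm]; linarith
  have hmb : m < b := by simp only [hm]; linarith
  have hmIcc : m ∈ Set.Icc (-1:ℝ) 1 := hsub ⟨hma.le, hmb.le⟩
  have hFc : F (ψ m) = 0 := by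
    have h0 : HasDerivAt ψ' (0 : ℝ) m := by
      have he : ψ' =ᶠ[nhds m] fun _ => (0:ℝ) := by
        filter_upwards [Ioo_mem_nhds hma hmb] with z hz
        exact hzero z ⟨hz.1.le, hz.2.le⟩
      exact (hasDerivAt_const m (0:ℝ)).congr_of_eventuallyEq he
    have := (hψ' m hmIcc).unique h0
    rw [← hode m hmIcc, this]
  -- Step 3: ODE uniqueness forces ψ constant on [-1,1]
  have hconst : ∀ y ∈ Set.Icc (-1:ℝ) 1, ψ y = ψ m := by
    obtain ⟨R, hR⟩ := (isCompact_Icc (a := (-1:ℝ)) (b := 1)).exists_bound_of_continuousOn hψc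
    obtain ⟨L, hL⟩ := (isCompact_Icc (a := -R) (b := R)).exists_bound_of_continuousOn
      (hDF.continuousOn)
    set K₀ : NNReal := Real.toNNReal L with hK₀
    have hFd : Differentiable ℝ F := hF.differentiable one_ne_zero
    have hFLip : LipschitzOnWith K₀ F (Set.Icc (-R) R) := by
      apply (convex_Icc (-R) R).lipschitzOnWith_of_nnnorm_hasDerivWithin_le
        (f' := deriv F)
      · exact fun x _ => (hFd x).hasDerivAt.hasDerivWithinAt
      · intro x hx
        rw [← NNReal.coe_le_coe, coe_nnnorm, hK₀, Real.coe_toNNReal']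
        exact le_max_of_le_left (hL x hx)
    set v : ℝ → ℝ × ℝ → ℝ × ℝ := fun _ p => (p.2, F p.1) with hv
    set sv : ℝ → Set (ℝ × ℝ) := fun _ => Set.Icc (-R) R ×ˢ (Set.univ : Set ℝ) with hsv
    have hvLip : ∀ t, LipschitzOnWith (K₀ + 1) (v t) (sv t) := by
      intro t
      rw [lipschitzOnWith_iff_dist_le_mul]
      intro p hp q hq
      have h1 : dist (F p.1) (F q.1) ≤ (K₀:ℝ) * dist p.1 q.1 :=
        hFLip.dist_le_mul p.1 hp.1 q.1 hq.1
      have h2 : dist p.1 q.1 ≤ dist p q := by rw [Prod.dist_eq]; exact le_max_left _ _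
      have h3 : dist p.2 q.2 ≤ dist p q := by rw [Prod.dist_eq]; exact le_max_right _ _
      have hK0 : (0:ℝ) ≤ (K₀:ℝ) := K₀.coe_nonneg
      have hdnn : (0:ℝ) ≤ dist p q := dist_nonneg
      have hcast : ((K₀+1 : ℝ≥0):ℝ) = (K₀:ℝ)+1 := by push_cast; ring
      calc dist (v t p) (v t q) = max (dist p.2 q.2) (dist (F p.1) (F q.1)) := by
            simp [hv, Prod.dist_eq]
        _ ≤ ((K₀+1 : ℝ≥0):ℝ) * dist p q := by
            rw [hcast]
            apply max_le <;> nlinarith [h1, h2, h3, hK0, hdnn]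
    have huniq := ODE_solution_unique_of_mem_Icc (v := v) (s := sv) (K := K₀ + 1) (fun t _ => hvLip t)
      (t₀ := m) (a := (-1:ℝ)) (b := 1)
      (f := fun y => (ψ y, ψ' y)) (g := fun _ => ((ψ m, 0) : ℝ × ℝ))
      ⟨lt_of_le_of_lt ha1 hma, lt_of_lt_of_le hmb hb1⟩
      (hψc.prodMk hψ'c)
      (fun t ht => by
        have htI : t ∈ Set.Icc (-1:ℝ) 1 := ⟨ht.1.le, ht.2.le⟩
        have := (hψ t htI).prodMk (hψ' t htI)
        rwa [hode t htI] at this)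
      (fun t ht => ⟨abs_le.mp (hR t ⟨ht.1.le, ht.2.le⟩), Set.mem_univ _⟩)
      continuousOn_const
      (fun t _ => by
        have : v t ((ψ m, 0) : ℝ × ℝ) = ((0:ℝ), (0:ℝ)) := by simp [hv, hFc]
        rw [this]
        exact hasDerivAt_const t _)
      (fun t _ => ⟨abs_le.mp (hR m hmIcc), Set.mem_univ _⟩)
      (by simp [hzero m ⟨hma.le, hmb.le⟩])
    intro y hy
    have := huniq hy
    exact congrArg Prod.fst this
  exact hhom (by rw [← hbc₁, ← hbc₂, hconst (-1) ⟨le_refl _, by norm_num⟩,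
    hconst 1 ⟨by norm_num, le_refl _⟩])
end

section
/- Let ψ : D → ℝ be C² with ∇ψ vanishing along a C¹ curve x ↦ (x, y₀(x)) in D, and suppose Δψ(x, y₀(x)) = F(ψ(x, y₀(x))) = F(c₀) ≠ 0 at some point. Then ∂ᵧ²ψ(x, y₀(x)) ≠ 0 at that point, and in fact F(c₀) = (1 + (y₀'(x))²)·∂ᵧ²ψ(x, y₀(x)). -/
open ContinuousLinearMap in
/-- If ∇ψ vanishes along a C¹ curve x ↦ (x, y₀(x)) in D and at some point of
the curve Δψ = F(ψ) = F(c₀) ≠ 0, then at that point ∂ᵧ²ψ ≠ 0 and in fact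
F(c₀) = (1 + (y₀')²)·∂ᵧ²ψ. -/
theorem stmt5
    (D : Set (ℝ × ℝ)) (hD : IsOpen D)
    (ψ ψx ψy ψxx ψxy ψyy : ℝ × ℝ → ℝ)
    (hgrad : ∀ p ∈ D, HasFDerivAt ψ (ψx p • fst ℝ ℝ ℝ + ψy p • snd ℝ ℝ ℝ) p)
    (hψx : ∀ p ∈ D, HasFDerivAt ψx (ψxx p • fst ℝ ℝ ℝ + ψxy p • snd ℝ ℝ ℝ) p)
    (hψy : ∀ p ∈ D, HasFDerivAt ψy (ψxy p • fst ℝ ℝ ℝ + ψyy p • snd ℝ ℝ ℝ) p)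
    (a b : ℝ) (hab : a < b)
    (y₀ y₀' : ℝ → ℝ)
    (hy₀ : ∀ x ∈ Set.Ioo a b, HasDerivAt y₀ (y₀' x) x)
    (hmem : ∀ x ∈ Set.Ioo a b, (x, y₀ x) ∈ D)
    (hcritx : ∀ x ∈ Set.Ioo a b, ψx (x, y₀ x) = 0)
    (hcrity : ∀ x ∈ Set.Ioo a b, ψy (x, y₀ x) = 0)
    (F : ℝ → ℝ) (c₀ : ℝ)
    (x : ℝ) (hx : x ∈ Set.Ioo a b)
    (hval : ψ (x, y₀ x) = c₀)
    (hlap : ψxx (x, y₀ x) + ψyy (x, y₀ x) = F c₀)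
    (hFc₀ : F c₀ ≠ 0) :
    ψyy (x, y₀ x) ≠ 0 ∧ F c₀ = (1 + (y₀' x) ^ 2) * ψyy (x, y₀ x) := by
  -- derivative of the curve t ↦ (t, y₀ t)
  have hγ : HasDerivAt (fun t : ℝ => ((t, y₀ t) : ℝ × ℝ)) (1, y₀' x) x :=
    HasDerivAt.prodMk (hasDerivAt_id x) (hy₀ x hx)
  have hnhds : Set.Ioo a b ∈ nhds x := isOpen_Ioo.mem_nhds hx
  -- ψx along the curve is eventually zero, hence has derivative 0
  have hzx : HasDerivAt (fun t : ℝ => ψx (t, y₀ t)) 0 x := by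
    have h0 : HasDerivAt (fun _ : ℝ => (0 : ℝ)) 0 x := hasDerivAt_const x 0
    exact h0.congr_of_eventuallyEq
      (Filter.eventuallyEq_of_mem hnhds fun t ht => hcritx t ht)
  have hzy : HasDerivAt (fun t : ℝ => ψy (t, y₀ t)) 0 x := by
    have h0 : HasDerivAt (fun _ : ℝ => (0 : ℝ)) 0 x := hasDerivAt_const x 0
    exact h0.congr_of_eventuallyEq
      (Filter.eventuallyEq_of_mem hnhds fun t ht => hcrity t ht)
  -- chain rule
  have hcx : HasDerivAt (fun t : ℝ => ψx (t, y₀ t))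
      (ψxx (x, y₀ x) * 1 + ψxy (x, y₀ x) * y₀' x) x := by
    have := (hψx _ (hmem x hx)).comp_hasDerivAt x hγ
    simpa [Function.comp_def] using this
  have hcy : HasDerivAt (fun t : ℝ => ψy (t, y₀ t))
      (ψxy (x, y₀ x) * 1 + ψyy (x, y₀ x) * y₀' x) x := by
    have := (hψy _ (hmem x hx)).comp_hasDerivAt x hγ
    simpa [Function.comp_def] using this
  have e1 : ψxx (x, y₀ x) * 1 + ψxy (x, y₀ x) * y₀' x = 0 := hcx.unique hzx
  have e2 : ψxy (x, y₀ x) * 1 + ψyy (x, y₀ x) * y₀' x = 0 := hcy.unique hzy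
  have key : F c₀ = (1 + (y₀' x) ^ 2) * ψyy (x, y₀ x) := by linear_combination -hlap + e1 - y₀' x * e2
  refine ⟨fun h => hFc₀ ?_, key⟩
  rw [key, h, mul_zero]
end

section
/- Let F : ℝ → ℝ be C¹ with F' > -π²/4 (the first Dirichlet eigenvalue of -d²/dy² on (-1,1)), let k ≥ 1 be an integer, let ψ₀ : [-1,1] → ℝ be continuous, and let φ : [-1,1] → ℝ be the C² solution of φ''(y) = (k² + F'(ψ₀(y)))·φ(y) with φ(-1) = 0, φ(1) = 1. Then φ(y) ≠ 0 for every y ∈ (-1,1). -/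
open Set Real Filter

/-- The comparison function `w y = cos (π y / 2)` and its derivatives. -/
private lemma hasDerivAt_w (y : ℝ) :
    HasDerivAt (fun t : ℝ => Real.cos (Real.pi * t / 2))
      (-(Real.pi / 2) * Real.sin (Real.pi * y / 2)) y := by
  have h1 : HasDerivAt (fun t : ℝ => Real.pi * t / 2) (Real.pi / 2) y := by
    simpa using ((hasDerivAt_id y).const_mul Real.pi).div_const 2
  have := (Real.hasDerivAt_cos (Real.pi * y / 2)).comp y h1
  exact this.congr_deriv (by ring)

private lemma hasDerivAt_w' (y : ℝ) :
    HasDerivAt (fun t : ℝ => -(Real.pi / 2) * Real.sin (Real.pi * t / 2))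
      (-(Real.pi ^ 2 / 4) * Real.cos (Real.pi * y / 2)) y := by
  have h1 : HasDerivAt (fun t : ℝ => Real.pi * t / 2) (Real.pi / 2) y := by
    simpa using ((hasDerivAt_id y).const_mul Real.pi).div_const 2
  have := ((Real.hasDerivAt_sin (Real.pi * y / 2)).comp y h1).const_mul (-(Real.pi / 2))
  exact this.congr_deriv (by ring)

/-- Key Sturm-type lemma: if `φ'' = q φ` with `q + π²/4 > 0` on `[-1,1]`, and
`φ(-1) = φ(y₀) = 0` with `y₀ ∈ (-1,1)`, then `φ ≤ 0` on `(-1, y₀)`. -/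
private lemma aux_nonpos (q : ℝ → ℝ)
    (hq : ∀ y ∈ Set.Icc (-1 : ℝ) 1, 0 < q y + Real.pi ^ 2 / 4)
    (φ φ' : ℝ → ℝ)
    (hφ : ∀ y ∈ Set.Icc (-1 : ℝ) 1, HasDerivAt φ (φ' y) y)
    (hφ' : ∀ y ∈ Set.Icc (-1 : ℝ) 1, HasDerivAt φ' (q y * φ y) y)
    (y₀ : ℝ) (hy₀ : y₀ ∈ Set.Ioo (-1 : ℝ) 1)
    (h0 : φ (-1) = 0) (h0' : φ y₀ = 0)
    (x : ℝ) (hx : x ∈ Set.Ioo (-1 : ℝ) y₀) : φ x ≤ 0 := by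
  by_contra hpos
  push_neg at hpos
  have hφcont : ContinuousOn φ (Set.Icc (-1 : ℝ) 1) :=
    fun y hy => (hφ y hy).continuousAt.continuousWithinAt
  have hy₀1 : y₀ ≤ 1 := le_of_lt hy₀.2
  have hxI : x ∈ Set.Icc (-1 : ℝ) 1 := ⟨le_of_lt hx.1, le_trans (le_of_lt hx.2) hy₀1⟩
  -- the first zero to the right of x
  set S₁ : Set ℝ := Set.Icc x y₀ ∩ φ ⁻¹' {0} with hS₁def
  have hIccsub : Set.Icc x y₀ ⊆ Set.Icc (-1 : ℝ) 1 :=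
    Set.Icc_subset_Icc (le_of_lt hx.1) hy₀1
  have hS₁closed : IsClosed S₁ :=
    (hφcont.mono hIccsub).preimage_isClosed_of_isClosed isClosed_Icc isClosed_singleton
  have hS₁ne : S₁.Nonempty := ⟨y₀, ⟨le_of_lt hx.2, le_rfl⟩, h0'⟩
  have hS₁bdd : BddBelow S₁ := ⟨x, fun z hz => hz.1.1⟩
  set d := sInf S₁ with hddef
  have hdmem : d ∈ S₁ := hS₁closed.csInf_mem hS₁ne hS₁bdd
  have hφd : φ d = 0 := hdmem.2
  have hxd : x < d := lt_of_le_of_ne hdmem.1.1 (by intro h; rw [← h] at hφd; exact (ne_of_gt hpos) hφd)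
  have hdy₀ : d ≤ y₀ := hdmem.1.2
  -- φ > 0 on [x, d)
  have hposIco : ∀ y ∈ Set.Ico x d, 0 < φ y := by
    intro y hy
    by_contra hle
    push_neg at hle
    have hxy : x ≤ y := hy.1
    have h0mem : (0 : ℝ) ∈ Set.Icc (φ y) (φ x) := ⟨hle, le_of_lt hpos⟩
    obtain ⟨z, hz, hφz⟩ := intermediate_value_Icc' hxy
      (hφcont.mono (Set.Icc_subset_Icc hxI.1 (le_trans (le_of_lt (lt_of_lt_of_le hy.2 hdy₀)) hy₀1))) h0mem
    have hzS : z ∈ S₁ := ⟨⟨hz.1, le_trans hz.2 (le_of_lt (lt_of_lt_of_le hy.2 hdy₀))⟩, hφz⟩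
    exact absurd (csInf_le hS₁bdd hzS) (not_le.2 (lt_of_le_of_lt hz.2 hy.2))
  -- the last zero to the left of x
  set S₂ : Set ℝ := Set.Icc (-1 : ℝ) x ∩ φ ⁻¹' {0} with hS₂def
  have hIccsub₂ : Set.Icc (-1 : ℝ) x ⊆ Set.Icc (-1 : ℝ) 1 := Set.Icc_subset_Icc le_rfl hxI.2
  have hS₂closed : IsClosed S₂ :=
    (hφcont.mono hIccsub₂).preimage_isClosed_of_isClosed isClosed_Icc isClosed_singleton
  have hS₂ne : S₂.Nonempty := ⟨-1, ⟨le_rfl, le_of_lt hx.1⟩, h0⟩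
  have hS₂bdd : BddAbove S₂ := ⟨x, fun z hz => hz.1.2⟩
  set c := sSup S₂ with hcdef
  have hcmem : c ∈ S₂ := hS₂closed.csSup_mem hS₂ne hS₂bdd
  have hφc : φ c = 0 := hcmem.2
  have hcx : c < x := lt_of_le_of_ne hcmem.1.2 (by intro h; rw [h] at hφc; exact (ne_of_gt hpos) hφc)
  have hc1 : -1 ≤ c := hcmem.1.1
  -- φ > 0 on (c, x]
  have hposIoc : ∀ y ∈ Set.Ioc c x, 0 < φ y := by
    intro y hy
    by_contra hle
    push_neg at hle
    have hyx : y ≤ x := hy.2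
    have h0mem : (0 : ℝ) ∈ Set.Icc (φ y) (φ x) := ⟨hle, le_of_lt hpos⟩
    obtain ⟨z, hz, hφz⟩ := intermediate_value_Icc hyx
      (hφcont.mono (Set.Icc_subset_Icc (le_trans hc1 (le_of_lt hy.1)) hxI.2)) h0mem
    have hzS : z ∈ S₂ := ⟨⟨le_trans hc1 (le_trans (le_of_lt hy.1) hz.1), hz.2⟩, hφz⟩
    exact absurd (le_csSup hS₂bdd hzS) (not_le.2 (lt_of_lt_of_le hy.1 hz.1))
  have hcd : c < d := lt_trans hcx hxd
  have hIccCD : Set.Icc c d ⊆ Set.Icc (-1 : ℝ) 1 :=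
    Set.Icc_subset_Icc hc1 (le_trans hdy₀ hy₀1)
  -- φ > 0 on (c, d)
  have hposcd : ∀ y ∈ Set.Ioo c d, 0 < φ y := by
    intro y hy
    rcases le_or_gt y x with h | h
    · exact hposIoc y ⟨hy.1, h⟩
    · exact hposIco y ⟨le_of_lt h, hy.2⟩
  -- the comparison function
  set w : ℝ → ℝ := fun t => Real.cos (Real.pi * t / 2) with hwdef
  set w' : ℝ → ℝ := fun t => -(Real.pi / 2) * Real.sin (Real.pi * t / 2) with hw'def
  have hwpos : ∀ y : ℝ, y ∈ Set.Ioo (-1 : ℝ) 1 → 0 < w y := by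
    intro y hy
    apply Real.cos_pos_of_mem_Ioo
    constructor
    · have := Real.pi_pos; nlinarith [hy.1]
    · have := Real.pi_pos; nlinarith [hy.2]
  have hwnonneg : ∀ y : ℝ, y ∈ Set.Icc (-1 : ℝ) 1 → 0 ≤ w y := by
    intro y hy
    apply Real.cos_nonneg_of_mem_Icc
    constructor
    · have := Real.pi_pos; nlinarith [hy.1]
    · have := Real.pi_pos; nlinarith [hy.2]
  -- the Wronskian
  set W : ℝ → ℝ := fun y => φ' y * w y - φ y * w' y with hWdef
  have hWder : ∀ y ∈ Set.Icc (-1 : ℝ) 1,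
      HasDerivAt W ((q y + Real.pi ^ 2 / 4) * (φ y * w y)) y := by
    intro y hy
    have h1 := ((hφ' y hy).mul (hasDerivAt_w y)).sub ((hφ y hy).mul (hasDerivAt_w' y))
    refine h1.congr_deriv ?_
    simp only [hwdef, hw'def]
    ring
  have hWmono : StrictMonoOn W (Set.Icc c d) := by
    apply strictMonoOn_of_deriv_pos (convex_Icc c d)
    · exact fun y hy => ((hWder y (hIccCD hy)).differentiableAt).continuousAt.continuousWithinAt
    · intro y hy
      rw [interior_Icc] at hy
      have hyI : y ∈ Set.Icc (-1 : ℝ) 1 := hIccCD ⟨le_of_lt hy.1, le_of_lt hy.2⟩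
      rw [(hWder y hyI).deriv]
      have hy11 : y ∈ Set.Ioo (-1 : ℝ) 1 :=
        ⟨lt_of_le_of_lt hc1 hy.1, lt_of_lt_of_le hy.2 (le_trans hdy₀ (le_of_lt hy₀.2))⟩
      exact mul_pos (hq y hyI) (mul_pos (hposcd y hy) (hwpos y hy11))
  -- φ' c ≥ 0
  have hcI : c ∈ Set.Icc (-1 : ℝ) 1 := hIccCD ⟨le_rfl, le_of_lt hcd⟩
  have hdI : d ∈ Set.Icc (-1 : ℝ) 1 := hIccCD ⟨le_of_lt hcd, le_rfl⟩
  have hφ'c : 0 ≤ φ' c := by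
    have hdc : HasDerivWithinAt φ (φ' c) (Set.Ioi c) c := (hφ c hcI).hasDerivWithinAt
    rw [hasDerivWithinAt_iff_tendsto_slope' (notMem_Ioi.2 le_rfl)] at hdc
    refine ge_of_tendsto hdc ?_
    filter_upwards [Ioo_mem_nhdsGT hcd] with y hy
    rw [slope_def_field]
    rw [div_eq_mul_inv]
    apply mul_nonneg
    · rw [hφc, sub_zero]; exact le_of_lt (hposcd y hy)
    · exact inv_nonneg.2 (le_of_lt (sub_pos.2 hy.1))
  -- φ' d ≤ 0
  have hφ'd : φ' d ≤ 0 := by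
    have hdc : HasDerivWithinAt φ (φ' d) (Set.Iio d) d := (hφ d hdI).hasDerivWithinAt
    rw [hasDerivWithinAt_iff_tendsto_slope' (notMem_Iio.2 le_rfl)] at hdc
    refine le_of_tendsto hdc ?_
    filter_upwards [Ioo_mem_nhdsLT hcd] with y hy
    rw [slope_def_field]
    apply div_nonpos_of_nonneg_of_nonpos
    · rw [hφd, sub_zero]; exact le_of_lt (hposcd y hy)
    · exact le_of_lt (sub_neg.2 hy.2)
  have hWc : 0 ≤ W c := by
    simp only [hWdef, hφc, zero_mul, sub_zero]
    exact mul_nonneg hφ'c (hwnonneg c hcI)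
  have hWd : W d ≤ 0 := by
    simp only [hWdef, hφd, zero_mul, sub_zero]
    have hd11 : d ∈ Set.Ioo (-1 : ℝ) 1 :=
      ⟨lt_of_le_of_lt hc1 hcd, lt_of_le_of_lt hdy₀ hy₀.2⟩
    exact mul_nonpos_of_nonpos_of_nonneg hφ'd (le_of_lt (hwpos d hd11))
  have := hWmono ⟨le_rfl, le_of_lt hcd⟩ ⟨le_of_lt hcd, le_rfl⟩ hcd
  linarith

/-- if F ∈ C¹ with F' > -π²/4, k ≥ 1 an integer, ψ₀ continuous, and φ is the
C² solution of φ'' = (k² + F'(ψ₀))·φ on [-1,1] with φ(-1) = 0, φ(1) = 1, then φ never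
vanishes in the open interval (-1,1). -/
theorem stmt11
    (F : ℝ → ℝ) (hF : ContDiff ℝ 1 F)
    (hF' : ∀ t : ℝ, deriv F t > -(Real.pi ^ 2 / 4))
    (k : ℕ) (hk : 1 ≤ k)
    (ψ₀ : ℝ → ℝ) (hψ₀ : Continuous ψ₀)
    (φ φ' φ'' : ℝ → ℝ)
    (hφ : ∀ y ∈ Set.Icc (-1 : ℝ) 1, HasDerivAt φ (φ' y) y)
    (hφ' : ∀ y ∈ Set.Icc (-1 : ℝ) 1, HasDerivAt φ' (φ'' y) y)
    (hcont : ContinuousOn φ'' (Set.Icc (-1 : ℝ) 1))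
    (hode : ∀ y ∈ Set.Icc (-1 : ℝ) 1,
      φ'' y = ((k : ℝ) ^ 2 + deriv F (ψ₀ y)) * φ y)
    (hbc₁ : φ (-1) = 0) (hbc₂ : φ 1 = 1) :
    ∀ y ∈ Set.Ioo (-1 : ℝ) 1, φ y ≠ 0 := by
  intro y₀ hy₀ h0
  set q : ℝ → ℝ := fun t => (k : ℝ) ^ 2 + deriv F (ψ₀ t) with hqdef
  have hk1 : (1 : ℝ) ≤ (k : ℝ) := by exact_mod_cast hk
  have hqpos : ∀ y ∈ Set.Icc (-1 : ℝ) 1, 0 < q y + Real.pi ^ 2 / 4 := by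
    intro y _
    have := hF' (ψ₀ y)
    simp only [hqdef]
    nlinarith
  have hqcont : Continuous q :=
    continuous_const.add ((hF.continuous_deriv le_rfl).comp hψ₀)
  have hφ'q : ∀ y ∈ Set.Icc (-1 : ℝ) 1, HasDerivAt φ' (q y * φ y) y := by
    intro y hy
    have := hφ' y hy
    rwa [hode y hy] at this
  -- φ vanishes identically on [-1, y₀]
  have hzero : ∀ z ∈ Set.Icc (-1 : ℝ) y₀, φ z = 0 := by
    intro z hz
    rcases eq_or_lt_of_le hz.1 with h | h
    · rw [← h]; exact hbc₁
    rcases eq_or_lt_of_le hz.2 with h' | h'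
    · rw [h']; exact h0
    have h1 : φ z ≤ 0 := aux_nonpos q hqpos φ φ' hφ hφ'q y₀ hy₀ hbc₁ h0 z ⟨h, h'⟩
    have h2 : -φ z ≤ 0 := by
      apply aux_nonpos q hqpos (fun t => -φ t) (fun t => -φ' t)
        (fun y hy => (hφ y hy).neg)
        (fun y hy => (hφ'q y hy).neg.congr_deriv (by simp only [mul_neg]))
        y₀ hy₀ (by simp [hbc₁]) (by simp [h0]) z ⟨h, h'⟩
    linarith
  have hy₀I : y₀ ∈ Set.Icc (-1 : ℝ) 1 := ⟨le_of_lt hy₀.1, le_of_lt hy₀.2⟩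
  -- φ' y₀ = 0
  have hφ'y₀ : φ' y₀ = 0 := by
    have hud : UniqueDiffOn ℝ (Set.Icc (-1 : ℝ) y₀) := uniqueDiffOn_Icc hy₀.1
    have hudy : UniqueDiffWithinAt ℝ (Set.Icc (-1 : ℝ) y₀) y₀ :=
      hud y₀ ⟨le_of_lt hy₀.1, le_rfl⟩
    have h1 : HasDerivWithinAt φ (φ' y₀) (Set.Icc (-1 : ℝ) y₀) y₀ :=
      (hφ y₀ hy₀I).hasDerivWithinAt
    have h2 : HasDerivWithinAt φ 0 (Set.Icc (-1 : ℝ) y₀) y₀ :=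
      (hasDerivWithinAt_const y₀ _ (0 : ℝ)).congr hzero h0
    rw [← h1.derivWithin hudy, h2.derivWithin hudy]
  -- Gronwall on [y₀, 1]
  obtain ⟨M, hM⟩ : ∃ M : ℝ, ∀ t ∈ Set.Icc (-1 : ℝ) 1, |1 + q t| ≤ M := by
    obtain ⟨M, hM⟩ := isCompact_Icc.exists_bound_of_continuousOn
      ((continuous_const.add hqcont).continuousOn (s := Set.Icc (-1 : ℝ) 1))
    exact ⟨M, fun t ht => by simpa [Real.norm_eq_abs] using hM t ht⟩
  have hM0 : 0 ≤ M := le_trans (abs_nonneg _) (hM 0 ⟨by norm_num, by norm_num⟩)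
  set E : ℝ → ℝ := fun t => φ t ^ 2 + φ' t ^ 2 with hEdef
  set g : ℝ → ℝ := fun t => E t * Real.exp (-(M * t)) with hgdef
  have hgder : ∀ t ∈ Set.Icc (-1 : ℝ) 1,
      HasDerivAt g ((2 * φ t * φ' t * (1 + q t) - M * E t) * Real.exp (-(M * t))) t := by
    intro t ht
    have hE : HasDerivAt E (2 * φ t * φ' t * (1 + q t)) t := by
      have := ((hφ t ht).pow 2).add ((hφ'q t ht).pow 2)
      refine this.congr_deriv ?_
      push_cast
      ring
    have hexp : HasDerivAt (fun t : ℝ => Real.exp (-(M * t))) (-M * Real.exp (-(M * t))) t := by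
      have h1 : HasDerivAt (fun t : ℝ => -(M * t)) (-M) t := by
        exact ((hasDerivAt_id t).const_mul M).neg.congr_deriv (by ring)
      refine ((Real.hasDerivAt_exp (-(M * t))).comp t h1).congr_deriv ?_
      ring
    have := hE.mul hexp
    refine this.congr_deriv ?_
    simp only [hEdef]
    ring
  have hganti : AntitoneOn g (Set.Icc y₀ 1) := by
    have hsub : Set.Icc y₀ 1 ⊆ Set.Icc (-1 : ℝ) 1 := Set.Icc_subset_Icc hy₀I.1 le_rfl
    apply antitoneOn_of_deriv_nonpos (convex_Icc y₀ 1)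
    · exact fun t ht => ((hgder t (hsub ht)).differentiableAt).continuousAt.continuousWithinAt
    · intro t ht
      rw [interior_Icc] at ht
      exact ((hgder t (hsub ⟨le_of_lt ht.1, le_of_lt ht.2⟩)).differentiableAt).differentiableWithinAt
    · intro t ht
      rw [interior_Icc] at ht
      have htI : t ∈ Set.Icc (-1 : ℝ) 1 := hsub ⟨le_of_lt ht.1, le_of_lt ht.2⟩
      rw [(hgder t htI).deriv]
      apply mul_nonpos_of_nonpos_of_nonneg _ (le_of_lt (Real.exp_pos _))
      have habs := abs_le.mp (hM t htI)
      have h1 : 0 ≤ (M - (1 + q t)) * (φ t + φ' t) ^ 2 :=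
        mul_nonneg (by linarith [habs.2]) (sq_nonneg _)
      have h2 : 0 ≤ (M + (1 + q t)) * (φ t - φ' t) ^ 2 :=
        mul_nonneg (by linarith [habs.1]) (sq_nonneg _)
      simp only [hEdef]
      nlinarith
  have hgy₀ : g y₀ = 0 := by
    simp [hgdef, hEdef, h0, hφ'y₀]
  have h1I : (1 : ℝ) ∈ Set.Icc y₀ 1 := ⟨le_of_lt hy₀.2, le_rfl⟩
  have hy₀I' : y₀ ∈ Set.Icc y₀ 1 := ⟨le_rfl, le_of_lt hy₀.2⟩
  have hle := hganti hy₀I' h1I (le_of_lt hy₀.2)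
  rw [hgy₀] at hle
  have hg1 : 0 < g 1 := by
    have : (0:ℝ) < E 1 := by
      simp only [hEdef, hbc₂]
      nlinarith [sq_nonneg (φ' 1)]
    exact mul_pos this (Real.exp_pos _)
  linarith
end
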